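/- If v ∈ (F_{q^m})^n has rank r and v = v_1 + ... + v_r with each v_j of rank 1, then for every subset S ⊆ {1,...,r}, the vector ∑_{j∈S} v_j has rank exactly |S|. -/

import Mathlib

open Submodule

/-- The rank of a vector `v ∈ L^n`: the `Fq`-dimension of the `Fq`-span of its entries. -/
noncomputable def rkVec (Fq : Type*) {L : Type*} [Field Fq] [Field L] [Algebra Fq L]
    {n : ℕ} (v : Fin n → L) : ℕ :=
  Module.finrank Fq ↥(Submodule.span Fq (Set.range v))

/-- The rank-metric lattice `L_i(n,m;q)`: subspaces of `L^n` spanned by their vectors of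
rank at most `i`. -/
def RML (Fq L : Type*) [Field Fq] [Field L] [Algebra Fq L] (n i : ℕ) :
    Set (Submodule L (Fin n → L)) :=
  {X | X = Submodule.span L {x | x ∈ X ∧ rkVec Fq x ≤ i}}

/-- The meet in the rank-metric lattice: span of the rank-`≤ i` vectors of the intersection. -/
def rmlMeet (Fq : Type*) {L : Type*} [Field Fq] [Field L] [Algebra Fq L] {n : ℕ} (i : ℕ)
    (X Y : Submodule L (Fin n → L)) : Submodule L (Fin n → L) :=
  Submodule.span L {x | x ∈ X ⊓ Y ∧ rkVec Fq x ≤ i}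

/-- `X` is a modular element of the rank-metric lattice `L_i`. -/
def IsModularElt (Fq : Type*) {L : Type*} [Field Fq] [Field L] [Algebra Fq L] {n : ℕ} (i : ℕ)
    (X : Submodule L (Fin n → L)) : Prop :=
  ∀ Y ∈ RML Fq L n i,
    Module.finrank L ↥(rmlMeet Fq i X Y) + Module.finrank L ↥(X ⊔ Y)
      = Module.finrank L ↥X + Module.finrank L ↥Y


section Aux
variable (Fq : Type*) {L : Type*} [Field Fq] [Field L] [Algebra Fq L] {n : ℕ}

lemma rkVec_zero : rkVec Fq (0 : Fin n → L) = 0 := by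
  unfold rkVec
  have : Submodule.span Fq (Set.range (0 : Fin n → L)) = ⊥ := by
    rw [Submodule.span_eq_bot]; rintro x ⟨i, rfl⟩; rfl
  rw [this]; exact finrank_bot _ _

instance rkVec_fd (v : Fin n → L) :
    FiniteDimensional Fq (Submodule.span Fq (Set.range v)) :=
  FiniteDimensional.span_of_finite _ (Set.finite_range v)

lemma rkVec_add_le (x y : Fin n → L) : rkVec Fq (x + y) ≤ rkVec Fq x + rkVec Fq y := by
  unfold rkVec
  have hle : Submodule.span Fq (Set.range (x + y)) ≤
      Submodule.span Fq (Set.range x) ⊔ Submodule.span Fq (Set.range y) := by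
    rw [Submodule.span_le]
    rintro z ⟨i, rfl⟩
    exact Submodule.add_mem _
      (Submodule.mem_sup_left (Submodule.subset_span ⟨i, rfl⟩))
      (Submodule.mem_sup_right (Submodule.subset_span ⟨i, rfl⟩))
  calc Module.finrank Fq ↥(Submodule.span Fq (Set.range (x + y)))
      ≤ Module.finrank Fq ↥(Submodule.span Fq (Set.range x) ⊔ Submodule.span Fq (Set.range y)) :=
        Submodule.finrank_mono hle
    _ ≤ _ := Submodule.finrank_add_le_finrank_add_finrank _ _

lemma rkVec_sum_le {ι : Type*} (S : Finset ι) (f : ι → Fin n → L) :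
    rkVec Fq (∑ j ∈ S, f j) ≤ ∑ j ∈ S, rkVec Fq (f j) := by
  classical
  induction S using Finset.induction with
  | empty => simp [rkVec_zero]
  | insert _ _ hx ih =>
    rw [Finset.sum_insert hx, Finset.sum_insert hx]
    exact (rkVec_add_le Fq _ _).trans (by omega)
end Aux

theorem rank_subsum_of_rank_one_decomposition (q m n : ℕ) (hq : IsPrimePow q) (hn : 2 ≤ n)
    (hm : 2 ≤ m) (Fq L : Type) [Field Fq] [Field L] [Algebra Fq L] [Fintype Fq]
    (hcard : Fintype.card Fq = q) (hdim : Module.finrank Fq L = m)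
    (r : ℕ) (v : Fin n → L) (hr : rkVec Fq v = r)
    (w : Fin r → Fin n → L) (hw : ∀ j, rkVec Fq (w j) = 1) (hsum : v = ∑ j, w j) :
    ∀ S : Finset (Fin r), rkVec Fq (∑ j ∈ S, w j) = S.card := by
  intro S
  classical
  have hSc : S.card ≤ r := by simpa using S.card_le_univ
  have h1 : rkVec Fq (∑ j ∈ S, w j) ≤ S.card := by
    calc rkVec Fq (∑ j ∈ S, w j) ≤ ∑ j ∈ S, rkVec Fq (w j) := rkVec_sum_le Fq S w
      _ = S.card := by simp [hw]
  have h2 : rkVec Fq (∑ j ∈ Sᶜ, w j) ≤ r - S.card := by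
    calc rkVec Fq (∑ j ∈ Sᶜ, w j) ≤ ∑ j ∈ Sᶜ, rkVec Fq (w j) := rkVec_sum_le Fq Sᶜ w
      _ = Sᶜ.card := by simp [hw]
      _ = r - S.card := by simp [Finset.card_compl]
  have hv : v = (∑ j ∈ S, w j) + ∑ j ∈ Sᶜ, w j := by
    rw [hsum, ← Finset.sum_add_sum_compl S w]
  have h3 : r ≤ rkVec Fq (∑ j ∈ S, w j) + (r - S.card) := by
    calc r = rkVec Fq v := hr.symm
      _ ≤ rkVec Fq (∑ j ∈ S, w j) + rkVec Fq (∑ j ∈ Sᶜ, w j) := by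
          rw [hv]; exact rkVec_add_le Fq _ _
      _ ≤ _ := by omega
  omega
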